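/- Suppose Y : ℝ → ℝ satisfies Y' = -Y² + α. Then y = Y satisfies the fifth-order modified KdV travelling-wave equation y'''' - 10y²y'' - 10y(y')² + 6y⁵ - 6α²y = 0. -/

import Mathlib

/-- A Riccati solution solves the fifth-order modified KdV travelling-wave equation
`y'''' - 10y²y'' - 10y(y')² + 6y⁵ - 6α²y = 0`. -/
theorem riccati_solves_mkdv5 (Y : ℝ → ℝ) (α : ℝ)
    (hY : Differentiable ℝ Y)
    (hRic : ∀ z, deriv Y z = -(Y z) ^ 2 + α) :
    ∀ z, deriv (deriv (deriv (deriv Y))) z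
      - 10 * (Y z) ^ 2 * deriv (deriv Y) z
      - 10 * Y z * (deriv Y z) ^ 2
      + 6 * (Y z) ^ 5 - 6 * α ^ 2 * Y z = 0 := by
  have h0 : ∀ z, HasDerivAt Y (-(Y z) ^ 2 + α) z := fun z => by
    have := (hY z).hasDerivAt
    rwa [hRic z] at this
  have h1 : deriv Y = fun z => -(Y z) ^ 2 + α := funext hRic
  have h2 : ∀ z, HasDerivAt (deriv Y) (2 * (Y z) ^ 3 - 2 * α * Y z) z := fun z => by
    rw [h1]
    have := (((h0 z).pow 2).neg).add_const α
    refine this.congr_deriv ?_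
    push_cast
    ring
  have h2' : deriv (deriv Y) = fun z => 2 * (Y z) ^ 3 - 2 * α * Y z :=
    funext fun z => (h2 z).deriv
  have h3 : ∀ z, HasDerivAt (deriv (deriv Y))
      (-6 * (Y z) ^ 4 + 8 * α * (Y z) ^ 2 - 2 * α ^ 2) z := fun z => by
    rw [h2']
    have := (((h0 z).pow 3).const_mul 2).sub ((h0 z).const_mul (2 * α))
    refine this.congr_deriv ?_
    push_cast
    ring
  have h3' : deriv (deriv (deriv Y)) = fun z => -6 * (Y z) ^ 4 + 8 * α * (Y z) ^ 2 - 2 * α ^ 2 :=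
    funext fun z => (h3 z).deriv
  have h4 : ∀ z, HasDerivAt (deriv (deriv (deriv Y)))
      (24 * (Y z) ^ 5 - 40 * α * (Y z) ^ 3 + 16 * α ^ 2 * Y z) z := fun z => by
    rw [h3']
    have := ((((h0 z).pow 4).const_mul (-6)).add
      (((h0 z).pow 2).const_mul (8 * α))).sub_const (2 * α ^ 2)
    refine this.congr_deriv ?_
    push_cast
    ring
  intro z
  rw [(h4 z).deriv, hRic z]
  have := congrFun h2' z
  rw [this]
  ring
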